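/- Let M ∈ ℂ^{n×n} and b ∈ ℂ^n. The Krylov matrix [b, M·b, M²·b, …, M^{n−1}·b] ∈ ℂ^{n×n} is invertible if and only if there is no nonzero left eigenvector of M orthogonal to b, i.e., if and only if there exist no μ ∈ ℂ and nonzero w ∈ ℂ^n with w*·M = μ·w* and w*·b = 0. -/
import Mathlib

open Matrix

lemma krylov_aux_pow {n : ℕ} (M : Matrix (Fin n) (Fin n) ℂ) :
    M ^ n = -∑ i ∈ Finset.range n, M.charpoly.coeff i • M ^ i := by
  have h0 := M.aeval_self_charpoly
  rw [Polynomial.aeval_eq_sum_range] at h0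
  have hdeg : M.charpoly.natDegree = n := by
    rw [Matrix.charpoly_natDegree_eq_dim, Fintype.card_fin]
  rw [hdeg, Finset.sum_range_succ] at h0
  have hmon : M.charpoly.coeff n = 1 := by
    have := M.charpoly_monic
    rw [Polynomial.Monic, Polynomial.leadingCoeff, hdeg] at this
    exact this
  rw [hmon, one_smul] at h0
  linear_combination (norm := abel) h0

lemma krylov_aux_dot {n : ℕ} (M : Matrix (Fin n) (Fin n) ℂ) (b v : Fin n → ℂ)
    (h : ∀ j : Fin n, v ⬝ᵥ (M ^ (j : ℕ)).mulVec b = 0) (k : ℕ) :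
    v ⬝ᵥ (M ^ k).mulVec b = 0 := by
  induction k using Nat.strong_induction_on with
  | _ k ih =>
    rcases lt_or_ge k n with hk | hk
    · exact h ⟨k, hk⟩
    · obtain ⟨m, rfl⟩ := Nat.exists_eq_add_of_le hk
      rw [pow_add, krylov_aux_pow M]
      have hre : ((-∑ i ∈ Finset.range n, M.charpoly.coeff i • M ^ i) * M ^ m)
          = -∑ i ∈ Finset.range n, M.charpoly.coeff i • M ^ (i + m) := by
        rw [neg_mul, Finset.sum_mul]
        congr 1
        refine Finset.sum_congr rfl fun i _ => ?_
        rw [smul_mul_assoc, pow_add]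
      rw [hre, Matrix.neg_mulVec, dotProduct_neg, neg_eq_zero]
      let L : Matrix (Fin n) (Fin n) ℂ →ₗ[ℂ] ℂ :=
        { toFun := fun A => v ⬝ᵥ A.mulVec b
          map_add' := fun A B => by simp [Matrix.add_mulVec, dotProduct_add]
          map_smul' := fun c A => by
            simp [Matrix.smul_mulVec] }
      have : v ⬝ᵥ (∑ i ∈ Finset.range n, M.charpoly.coeff i • M ^ (i + m)).mulVec b
          = L (∑ i ∈ Finset.range n, M.charpoly.coeff i • M ^ (i + m)) := rfl
      rw [this, map_sum]
      refine Finset.sum_eq_zero fun i hi => ?_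
      rw [_root_.map_smul]
      have h0 : L (M ^ (i + m)) = 0 := ih (i + m) (by simp at hi; omega)
      rw [h0, smul_zero]

theorem krylov_invertible_iff {n : ℕ} (M : Matrix (Fin n) (Fin n) ℂ) (b : Fin n → ℂ) :
    IsUnit (Matrix.of fun i j : Fin n => (M ^ (j : ℕ)).mulVec b i) ↔
      ¬ ∃ (μ : ℂ) (w : Fin n → ℂ), w ≠ 0 ∧
          Matrix.vecMul (star w) M = μ • star w ∧ star w ⬝ᵥ b = 0 := by
  set K : Matrix (Fin n) (Fin n) ℂ :=
    Matrix.of fun i j : Fin n => (M ^ (j : ℕ)).mulVec b i with hKdef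
  have hvm : ∀ (v : Fin n → ℂ) (j : Fin n),
      Matrix.vecMul v K j = v ⬝ᵥ (M ^ (j : ℕ)).mulVec b := by
    intro v j
    simp [hKdef, Matrix.vecMul, dotProduct]
  constructor
  · rintro hK ⟨μ, w, hw, hMw, hwb⟩
    have hpow : ∀ k : ℕ, Matrix.vecMul (star w) (M ^ k) = μ ^ k • star w := by
      intro k
      induction k with
      | zero => simp
      | succ k ih =>
        rw [pow_succ, ← Matrix.vecMul_vecMul, ih, Matrix.smul_vecMul, hMw,
          smul_smul, pow_succ]
    have hzero : Matrix.vecMul (star w) K = 0 := by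
      funext j
      rw [hvm, Matrix.dotProduct_mulVec, hpow, smul_dotProduct, hwb,
        smul_zero, Pi.zero_apply]
    have hdet : K.det = 0 :=
      Matrix.exists_vecMul_eq_zero_iff.mp ⟨star w, star_ne_zero.mpr hw, hzero⟩
    rw [Matrix.isUnit_iff_isUnit_det, isUnit_iff_ne_zero] at hK
    exact hK hdet
  · intro hP
    by_contra hK
    apply hP
    rw [Matrix.isUnit_iff_isUnit_det, isUnit_iff_ne_zero, not_not] at hK
    obtain ⟨v, hv, hvK⟩ := Matrix.exists_vecMul_eq_zero_iff.mpr hK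
    have hvall : ∀ k : ℕ, v ⬝ᵥ (M ^ k).mulVec b = 0 := by
      refine krylov_aux_dot M b v (fun j => ?_)
      rw [← hvm]
      rw [hvK]
      rfl
    -- the annihilator of the Krylov space
    let A : Submodule ℂ (Fin n → ℂ) :=
      { carrier := {g | ∀ k : ℕ, g ⬝ᵥ (M ^ k).mulVec b = 0}
        add_mem' := fun {g₁ g₂} h1 h2 k => by
          rw [add_dotProduct, h1 k, h2 k, add_zero]
        zero_mem' := fun k => zero_dotProduct _
        smul_mem' := fun c g hg k => by
          rw [smul_dotProduct, hg k, smul_zero] }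
    have hvA : v ∈ A := hvall
    haveI : Nontrivial A :=
      ⟨⟨⟨v, hvA⟩, 0, by simp [Subtype.ext_iff, hv]⟩⟩
    have hT : ∀ x ∈ A, (Mᵀ).mulVecLin x ∈ A := by
      intro g hg k
      have : (Mᵀ).mulVecLin g = Matrix.vecMul g M := by
        simp [Matrix.mulVecLin_apply, Matrix.mulVec_transpose]
      rw [this, ← Matrix.dotProduct_mulVec, Matrix.mulVec_mulVec, ← pow_succ']
      exact hg (k + 1)
    let T : Module.End ℂ A := LinearMap.restrict (Mᵀ).mulVecLin hT
    obtain ⟨μ, hμ⟩ := Module.End.exists_eigenvalue T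
    obtain ⟨x, hx⟩ := hμ.exists_hasEigenvector
    have hx0 : (x : Fin n → ℂ) ≠ 0 := fun h =>
      hx.2 (by ext; exact congrFun h _)
    have hTx : (Mᵀ).mulVecLin (x : Fin n → ℂ) = μ • (x : Fin n → ℂ) := by
      have := hx.1
      rw [Module.End.mem_eigenspace_iff] at this
      have h2 := congrArg (Subtype.val) this
      simpa [T, LinearMap.restrict_apply] using h2
    refine ⟨μ, star (x : Fin n → ℂ), star_ne_zero.mpr hx0, ?_, ?_⟩
    · rw [star_star, ← Matrix.mulVec_transpose, ← Matrix.mulVecLin_apply, hTx]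
    · rw [star_star]
      have := x.2 0
      simpa using this
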